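/- Fix n > 1, c > n, and set r = n/c ∈ (0,1). The function f(α) = cα(2 − r/(4(1−α²) + r)) is strictly increasing on the interval (−(1/2)sqrt((1−γ)(3+γ)), 0), where γ = sqrt(1−r), and maps this interval onto (−(c/4)sqrt(1−γ)(γ+3)^{3/2}, 0). -/

import Mathlib

set_option maxHeartbeats 1000000

private lemma keypos (r γ t : ℝ) (h1 : 0 < r) (h2 : r < 1) (hγ : γ^2 = 1 - r) (hγ0 : 0 ≤ γ)
    (ht : 0 ≤ t) (ht2 : 4*t + 2*γ ≤ 2 + r) :
    0 < 2*(4-4*t+r)^2 - r*(4+4*t+r) := by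
  have hγpos : 0 < γ := by
    rcases hγ0.lt_or_eq with h | h
    · exact h
    · exfalso; nlinarith
  have hγ1 : γ ≤ 1 := by nlinarith
  have hr : r = 1 - γ^2 := by linarith
  subst hr
  set s : ℝ := 2 + (1 - γ^2) - 2*γ - 4*t with hs
  have hs0 : 0 ≤ s := by simp only [hs]; linarith
  have hid : 2*(4-4*t+(1-γ^2))^2 - (1-γ^2)*(4+4*t+(1-γ^2))
      = 2*s^2 + s*(9+8*γ-γ^2) + 2*γ*(1+γ)*(9-γ^2) := by
    simp only [hs]; ring
  rw [hid]
  have h3 : 0 < 2*γ*(1+γ)*(9-γ^2) := by nlinarith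
  have h4 : 0 ≤ s*(9+8*γ-γ^2) := by nlinarith
  nlinarith [sq_nonneg s]

/-- Fix `n > 1`, `c > n`, `r = n/c`, `γ = sqrt(1−r) = sqrt((c−n)/c)`. The map
`f(α) = cα(2 − r/(4(1−α²) + r))` is strictly increasing on
`(−(1/2)sqrt((1−γ)(3+γ)), 0)` and maps this interval onto
`(−(c/4)sqrt(1−γ)(γ+3)^{3/2}, 0)`. -/
theorem real_part_map_strictMono_image (n c : ℝ) (hn : 1 < n) (hc : n < c) :
    StrictMonoOn
        (fun α : ℝ => c * α * (2 - (n / c) / (4 * (1 - α ^ 2) + n / c)))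
        (Set.Ioo (-(1 / 2 * Real.sqrt
          ((1 - Real.sqrt (1 - n / c)) * (3 + Real.sqrt (1 - n / c))))) 0) ∧
    (fun α : ℝ => c * α * (2 - (n / c) / (4 * (1 - α ^ 2) + n / c))) ''
        (Set.Ioo (-(1 / 2 * Real.sqrt
          ((1 - Real.sqrt (1 - n / c)) * (3 + Real.sqrt (1 - n / c))))) 0) =
      Set.Ioo (-(c / 4 * Real.sqrt (1 - Real.sqrt (1 - n / c)) *
        (Real.sqrt (1 - n / c) + 3) ^ ((3 : ℝ) / 2))) 0 := by
  have hc0 : 0 < c := by linarith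
  set r : ℝ := n / c with hrdef
  have hr0 : 0 < r := div_pos (by linarith) hc0
  have hr1 : r < 1 := (div_lt_one hc0).2 hc
  set γ : ℝ := Real.sqrt (1 - r) with hγdef
  have hγ0 : 0 ≤ γ := Real.sqrt_nonneg _
  have hγsq : γ ^ 2 = 1 - r := Real.sq_sqrt (by linarith)
  have hγ1 : γ < 1 := by nlinarith
  set a : ℝ := 1 / 2 * Real.sqrt ((1 - γ) * (3 + γ)) with hadef
  have hprod : (0:ℝ) < (1 - γ) * (3 + γ) := by nlinarith
  have ha0 : 0 < a := by
    rw [hadef]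
    positivity
  have hasq : a ^ 2 = (1 - γ) * (3 + γ) / 4 := by
    rw [hadef, mul_pow, Real.sq_sqrt hprod.le]; ring
  set f : ℝ → ℝ := fun α : ℝ => c * α * (2 - r / (4 * (1 - α ^ 2) + r)) with hf
  -- denominator bound on Icc
  have hd : ∀ x ∈ Set.Icc (-a) 0, (2:ℝ) ≤ 4 * (1 - x ^ 2) + r := by
    intro x hx
    have hx1 := hx.1
    have hx2 := hx.2
    have hxa : x ^ 2 ≤ a ^ 2 := by nlinarith
    nlinarith
  have hdne : ∀ x ∈ Set.Icc (-a) 0, (4 * (1 - x ^ 2) + r) ≠ 0 := by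
    intro x hx
    have := hd x hx
    linarith
  -- continuity
  have contf : ContinuousOn f (Set.Icc (-a) 0) := by
    apply ContinuousOn.mul (by fun_prop)
    apply ContinuousOn.sub continuousOn_const
    exact ContinuousOn.div continuousOn_const (by fun_prop) hdne
  -- derivative
  have hderiv : ∀ x ∈ Set.Icc (-a) 0, HasDerivAt f
      (c * (2 - r / (4 * (1 - x ^ 2) + r)) - 8 * c * r * x ^ 2 / (4 * (1 - x ^ 2) + r) ^ 2) x := by
    intro x hx
    have hne := hdne x hx
    have hδ : HasDerivAt (fun α : ℝ => 4 * (1 - α ^ 2) + r) (-(8 * x)) x := by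
      have h1 : HasDerivAt (fun α : ℝ => α ^ 2) (2 * x) x := by
        simpa using hasDerivAt_pow 2 x
      have h2 := ((h1.const_mul (4:ℝ)).const_sub 4).add_const r
      convert h2 using 1
      · rfl
      · rfl
      · funext y; ring
      · ring
    have hdiv : HasDerivAt (fun α : ℝ => r / (4 * (1 - α ^ 2) + r))
        (8 * r * x / (4 * (1 - x ^ 2) + r) ^ 2) x := by
      have := (hasDerivAt_const x r).div hδ hne
      convert this using 1
      · rfl
      · rfl
      · rfl
      field_simp
      ring
    have hlin : HasDerivAt (fun α : ℝ => c * α) c x := by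
      simpa using (hasDerivAt_id x).const_mul c
    have := hlin.mul ((hasDerivAt_const x (2:ℝ)).sub hdiv)
    convert this using 1
    · rfl
    · rfl
    · rfl
    simp only [Pi.sub_apply]
    ring
  -- derivative positivity on Ioo
  have hpos : ∀ x ∈ Set.Ioo (-a) 0,
      0 < c * (2 - r / (4 * (1 - x ^ 2) + r)) - 8 * c * r * x ^ 2 / (4 * (1 - x ^ 2) + r) ^ 2 := by
    intro x hx
    have hxIcc : x ∈ Set.Icc (-a) 0 := Set.mem_Icc.2 ⟨hx.1.le, hx.2.le⟩
    have hdx := hd x hxIcc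
    have hxa : x ^ 2 ≤ a ^ 2 := by
      have := hx.1.le; have := hx.2.le; nlinarith
    have ht2 : 4 * x ^ 2 + 2 * γ ≤ 2 + r := by nlinarith
    have hkey := keypos r γ (x ^ 2) hr0 hr1 hγsq hγ0 (sq_nonneg x) ht2
    have hD : (0:ℝ) < 4 * (1 - x ^ 2) + r := by linarith
    have hrw : c * (2 - r / (4 * (1 - x ^ 2) + r)) - 8 * c * r * x ^ 2 / (4 * (1 - x ^ 2) + r) ^ 2
        = c * (2 * (4 - 4 * x ^ 2 + r) ^ 2 - r * (4 + 4 * x ^ 2 + r)) / (4 * (1 - x ^ 2) + r) ^ 2 := by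
      field_simp
      ring
    rw [hrw]
    positivity
  -- strict monotonicity on Icc
  have hmono : StrictMonoOn f (Set.Icc (-a) 0) := by
    apply strictMonoOn_of_deriv_pos (convex_Icc _ _) contf
    intro x hx
    rw [interior_Icc] at hx
    rw [(hderiv x (Set.mem_Icc.2 ⟨hx.1.le, hx.2.le⟩)).deriv]
    exact hpos x hx
  constructor
  · exact hmono.mono Set.Ioo_subset_Icc_self
  -- image
  have hfa : f (-a) = -(c / 4 * Real.sqrt (1 - γ) * (γ + 3) ^ ((3:ℝ)/2)) := by
    have h1a : 1 - (-a) ^ 2 = (1 + γ) ^ 2 / 4 := by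
      have : (-a) ^ 2 = a ^ 2 := by ring
      rw [this, hasq]; nlinarith
    have hdv : 4 * (1 - (-a) ^ 2) + r = 2 * (1 + γ) := by
      rw [h1a]; nlinarith
    have h32 : (γ + 3) ^ ((3:ℝ)/2) = (γ + 3) * Real.sqrt (γ + 3) := by
      rw [show (3:ℝ)/2 = 1 + 1/2 by norm_num, Real.rpow_add (by linarith), Real.rpow_one,
        ← Real.sqrt_eq_rpow]
    have hsplit : Real.sqrt ((1 - γ) * (3 + γ)) = Real.sqrt (1 - γ) * Real.sqrt (3 + γ) :=
      Real.sqrt_mul (by linarith) _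
    have hγne : (1:ℝ) + γ ≠ 0 := by linarith
    have h0 : f (-a) = c * (-a) * (2 - r / (4 * (1 - (-a) ^ 2) + r)) := rfl
    rw [hdv] at h0
    rw [h0]
    have hrr : r = 1 - γ ^ 2 := by linarith
    have h2 : 2 - r / (2 * (1 + γ)) = (3 + γ) / 2 := by
      rw [hrr]
      field_simp
      ring
    rw [h2, hadef, hsplit, h32]
    ring_nf
  have hf0 : f 0 = 0 := by simp [hf]
  have hmemL : -a ∈ Set.Icc (-a) 0 := Set.mem_Icc.2 ⟨le_refl _, by linarith⟩
  have hmemR : (0:ℝ) ∈ Set.Icc (-a) 0 := Set.mem_Icc.2 ⟨by linarith, le_refl _⟩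
  have himg : f '' Set.Ioo (-a) 0 = Set.Ioo (f (-a)) (f 0) := by
    apply Set.Subset.antisymm
    · rintro _ ⟨x, hx, rfl⟩
      have hxIcc : x ∈ Set.Icc (-a) 0 := Set.mem_Icc.2 ⟨hx.1.le, hx.2.le⟩
      exact ⟨hmono hmemL hxIcc hx.1, hmono hxIcc hmemR hx.2⟩
    · exact intermediate_value_Ioo (by linarith) contf
  rw [himg, hfa, hf0]
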